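/- arXiv:2202.03628 — 3 statements merged into one kernel-verified Lean document; each statement's English description precedes it below -/
import Mathlib

section
/- Let N ≥ 2 and consider a star graph on domains {1,...,N} with domain 1 as center, so A_{1j} = A_{j1} = 1 for j ≥ 2 and all other entries 0. Suppose each domain has equal probability 1/N and let βᵢ(e) = pᵢ(e)/p(e) be density ratios with ∑ᵢ βᵢ(e) = N for every e. If for all pairs of encodings (e,e'), (1/N²)·∑_{j=2}^{N} (β₁(e)βⱼ(e') + β₁(e')βⱼ(e)) = 2(N-1)/N², then β₁(e) is constant in e and equals either 1 or N-1; and if additionally E_e[β₁(e)] = 1, then β₁(e) = 1 for all e, i.e., p₁(e) = (1/(N-1))·∑_{j=2}^{N} pⱼ(e). -/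
open MeasureTheory

theorem star_graph_optimum {Ω : Type*} [MeasurableSpace Ω]
    (μ : Measure Ω) [IsProbabilityMeasure μ]
    (N : ℕ) (hN : 2 ≤ N)
    (p : ℕ → Ω → ℝ) (pbar : Ω → ℝ)
    (hpbar : ∀ e, pbar e = (1 / (N : ℝ)) * ∑ i ∈ Finset.range N, p i e)
    (hpos : ∀ e, 0 < pbar e)
    (β : ℕ → Ω → ℝ) (hβ : ∀ i e, β i e = p i e / pbar e)
    (hsum : ∀ e, ∑ i ∈ Finset.range N, β i e = (N : ℝ))
    (hopt : ∀ e e' : Ω,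
      (1 / (N : ℝ) ^ 2) * ∑ j ∈ Finset.Ico 1 N, (β 0 e * β j e' + β 0 e' * β j e)
        = 2 * ((N : ℝ) - 1) / (N : ℝ) ^ 2) :
    (∃ c : ℝ, (∀ e, β 0 e = c) ∧ (c = 1 ∨ c = (N : ℝ) - 1)) ∧
      ((∫ e, β 0 e ∂μ) = 1 →
        ∀ e, β 0 e = 1 ∧ p 0 e = (1 / ((N : ℝ) - 1)) * ∑ j ∈ Finset.Ico 1 N, p j e) := by
  have hN0 : 0 < N := by omega
  have hNR : (2 : ℝ) ≤ (N : ℝ) := by exact_mod_cast hN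
  have hNne : (N : ℝ) ≠ 0 := by linarith
  have hN2 : ((N : ℝ)) ^ 2 ≠ 0 := pow_ne_zero _ hNne
  have hIco : ∀ e, ∑ j ∈ Finset.Ico 1 N, β j e = (N : ℝ) - β 0 e := by
    intro e
    have h := hsum e
    rw [Finset.range_eq_Ico, Finset.sum_eq_sum_Ico_succ_bot hN0] at h
    linarith
  have hquad : ∀ e, β 0 e = 1 ∨ β 0 e = (N : ℝ) - 1 := by
    intro e
    have h := hopt e e
    have hs : ∑ j ∈ Finset.Ico 1 N, (β 0 e * β j e + β 0 e * β j e)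
        = β 0 e * ((N : ℝ) - β 0 e) + β 0 e * ((N : ℝ) - β 0 e) := by
      rw [Finset.sum_add_distrib, ← Finset.mul_sum, hIco e]
    rw [hs] at h
    have h' : β 0 e * ((N : ℝ) - β 0 e) + β 0 e * ((N : ℝ) - β 0 e)
        = 2 * ((N : ℝ) - 1) := by
      field_simp at h
      linarith
    have hz : (β 0 e - 1) * (β 0 e - ((N : ℝ) - 1)) = 0 := by nlinarith
    rcases mul_eq_zero.mp hz with h1 | h1
    · left; linarith
    · right; linarith
  have hconst : ∀ e e', β 0 e = β 0 e' := by
    intro e e'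
    have h := hopt e e'
    have hs : ∑ j ∈ Finset.Ico 1 N, (β 0 e * β j e' + β 0 e' * β j e)
        = β 0 e * ((N : ℝ) - β 0 e') + β 0 e' * ((N : ℝ) - β 0 e) := by
      rw [Finset.sum_add_distrib, ← Finset.mul_sum, ← Finset.mul_sum, hIco e, hIco e']
    rw [hs] at h
    have h' : β 0 e * ((N : ℝ) - β 0 e') + β 0 e' * ((N : ℝ) - β 0 e)
        = 2 * ((N : ℝ) - 1) := by
      field_simp at h
      linarith
    rcases hquad e with h1 | h1 <;> rcases hquad e' with h2 | h2 <;> nlinarith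
  obtain ⟨e₀⟩ : Nonempty Ω := MeasureTheory.Measure.nonempty_of_neZero μ
  refine ⟨⟨β 0 e₀, fun e => hconst e e₀, hquad e₀⟩, ?_⟩
  intro hint e
  have hval : (∫ e, β 0 e ∂μ) = β 0 e₀ := by
    have hfe : ∀ x, β 0 x = β 0 e₀ := fun x => hconst x e₀
    calc (∫ e, β 0 e ∂μ) = ∫ _, β 0 e₀ ∂μ := by simp_rw [hfe]
      _ = β 0 e₀ := by simp
  have h1 : β 0 e = 1 := by rw [hconst e e₀]; rw [hval] at hint; exact hint
  refine ⟨h1, ?_⟩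
  have hpe : p 0 e = pbar e := by
    have := hβ 0 e
    rw [h1, eq_comm, div_eq_one_iff_eq (hpos e).ne'] at this
    exact this
  have hsump : ∑ i ∈ Finset.range N, p i e = (N : ℝ) * pbar e := by
    have h := hsum e
    have hpb := (hpos e).ne'
    simp_rw [hβ] at h
    rw [← Finset.sum_div] at h
    field_simp at h
    linarith
  have hsplit : ∑ i ∈ Finset.range N, p i e
      = p 0 e + ∑ j ∈ Finset.Ico 1 N, p j e := by
    rw [Finset.range_eq_Ico, Finset.sum_eq_sum_Ico_succ_bot hN0]
  have hrest : ∑ j ∈ Finset.Ico 1 N, p j e = ((N : ℝ) - 1) * p 0 e := by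
    rw [hpe]; linarith [hsump, hsplit, hpe]
  rw [hrest]
  have hN1 : (N : ℝ) - 1 ≠ 0 := by linarith
  field_simp
end

section
/- Consider a chain graph on 3 domains (domain 2 connected to domains 1 and 3, no other edges), each with probability 1/3, and density ratios βᵢ(e) = pᵢ(e)/p(e) satisfying β₁(e)+β₂(e)+β₃(e) = 3 for all e. The condition that for all e, e': β₂(e)(β₁(e')+β₃(e')) + β₂(e')(β₁(e)+β₃(e)) = 4, together with E_e[β₂(e)] = 1, holds if and only if β₂(e) = 1 for all e, i.e., p₂(e) = (1/2)(p₁(e)+p₃(e)) for all e. -/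
open MeasureTheory

theorem chain_three_nodes {Ω : Type*} [MeasurableSpace Ω]
    (μ : Measure Ω) [IsProbabilityMeasure μ]
    (p1 p2 p3 : Ω → ℝ) (pbar : Ω → ℝ)
    (hpbar : ∀ e, pbar e = (p1 e + p2 e + p3 e) / 3)
    (hpos : ∀ e, 0 < pbar e)
    (β1 β2 β3 : Ω → ℝ)
    (hβ1 : ∀ e, β1 e = p1 e / pbar e)
    (hβ2 : ∀ e, β2 e = p2 e / pbar e)
    (hβ3 : ∀ e, β3 e = p3 e / pbar e)
    (hsum : ∀ e, β1 e + β2 e + β3 e = 3) :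
    ((∀ e e' : Ω, β2 e * (β1 e' + β3 e') + β2 e' * (β1 e + β3 e) = 4) ∧
        (∫ e, β2 e ∂μ) = 1) ↔
      ((∀ e, β2 e = 1) ∧ (∀ e, p2 e = (p1 e + p3 e) / 2)) := by
  constructor
  · rintro ⟨hpair, hint⟩
    have hdicho : ∀ e, β2 e = 1 ∨ β2 e = 2 := by
      intro e
      have h := hpair e e
      have hb : β1 e + β3 e = 3 - β2 e := by have := hsum e; linarith
      have : (β2 e - 1) * (β2 e - 2) = 0 := by
        linear_combination (-(1/2 : ℝ)) * h + (β2 e) * hb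
      rcases mul_eq_zero.mp this with h' | h'
      · left; linarith
      · right; linarith
    have hall : ∀ e, β2 e = 1 := by
      by_contra h
      push_neg at h
      obtain ⟨e0, he0⟩ := h
      have he0' : β2 e0 = 2 := (hdicho e0).resolve_left he0
      have hall2 : ∀ e, β2 e = 2 := by
        intro e
        rcases hdicho e with h1 | h2
        · exfalso
          have h := hpair e e0
          have hs := hsum e
          have hs0 := hsum e0
          nlinarith
        · exact h2
      have : (∫ e, β2 e ∂μ) = 2 := by
        rw [show (fun e => β2 e) = (fun _ : Ω => (2 : ℝ)) from funext hall2]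
        simp
      linarith
    refine ⟨hall, fun e => ?_⟩
    have h1 := hall e
    rw [hβ2 e] at h1
    have hp := (hpos e).ne'
    have : p2 e = pbar e := by
      field_simp at h1
      linarith
    rw [hpbar e] at this
    linarith
  · rintro ⟨h1, h2⟩
    constructor
    · intro e e'
      have hs := hsum e
      have hs' := hsum e'
      rw [h1 e, h1 e'] at *
      linarith
    · rw [show (fun e => β2 e) = (fun _ : Ω => (1 : ℝ)) from funext h1]
      simp
end

section
/- Let N ≥ 2 and let the clique adjacency matrix A on {1,...,N} have A_{ij} = 1 for i ≠ j and A_{ii} = 0, with domains equiprobable. Suppose nonnegative functions βᵢ(e) satisfy ∑ᵢ βᵢ(e) = N for all e. If for all pairs (e,e'), ∑_{i≠j} βᵢ(e)βⱼ(e') = N(N-1), then βᵢ(e) = 1 for all i and e. -/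
theorem clique_corollary {Ω : Type*} (N : ℕ) (hN : 2 ≤ N)
    (β : Ω → ℕ → ℝ)
    (hnn : ∀ e i, 0 ≤ β e i)
    (hsum : ∀ e, ∑ i ∈ Finset.range N, β e i = (N : ℝ))
    (hopt : ∀ e e' : Ω,
      ∑ i ∈ Finset.range N, ∑ j ∈ (Finset.range N).filter (fun j => j ≠ i),
        β e i * β e' j = (N : ℝ) * ((N : ℝ) - 1)) :
    ∀ e : Ω, ∀ i ∈ Finset.range N, β e i = 1 := by
  intro e i hi
  have h := hopt e e
  have hrw : ∀ i ∈ Finset.range N,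
      ∑ j ∈ (Finset.range N).filter (fun j => j ≠ i), β e i * β e j
        = β e i * ((N : ℝ) - β e i) := by
    intro i hi
    rw [Finset.filter_ne', ← Finset.mul_sum, Finset.sum_erase_eq_sub hi, hsum]
  rw [Finset.sum_congr rfl hrw] at h
  have expand2 : ∑ i ∈ Finset.range N, β e i * ((N:ℝ) - β e i)
      = (∑ i ∈ Finset.range N, β e i) * (N:ℝ) - ∑ i ∈ Finset.range N, (β e i)^2 := by
    rw [Finset.sum_mul, ← Finset.sum_sub_distrib]
    apply Finset.sum_congr rfl; intro i _; ring
  rw [expand2, hsum e] at h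
  have hS : ∑ i ∈ Finset.range N, (β e i)^2 = (N:ℝ) := by linarith
  have hsq : ∑ i ∈ Finset.range N, (β e i - 1)^2 = 0 := by
    have expand : ∑ i ∈ Finset.range N, (β e i - 1)^2
        = ∑ i ∈ Finset.range N, ((β e i)^2 - 2 * β e i + 1) := by
      apply Finset.sum_congr rfl; intro i _; ring
    rw [expand, Finset.sum_add_distrib, Finset.sum_sub_distrib, Finset.sum_const,
      nsmul_eq_mul, ← Finset.mul_sum, hS, hsum e, Finset.card_range]
    ring
  have := (Finset.sum_eq_zero_iff_of_nonneg (fun j _ => sq_nonneg (β e j - 1))).mp hsq i hi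
  nlinarith [this]
end
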